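/- arXiv:2604.13819 — 2 statements merged into one kernel-verified Lean document; each statement's English description precedes it below -/
import Mathlib

section
/- For t ∈ ℝ \ ℤ_{≥0} and each i ∈ ℤ_{≥1}, there exists a polynomial F_i in i−1 variables (depending only on t and i) such that for every A ∈ U = 1 + zℝ⟦z⟧, κ_i^t(A) = (t^{i−1}/(t)_i) p_i(A) + F_i(p_1(A), …, p_{i−1}(A)); that is, the i-th t-deformed cumulant is a polynomial in the power sums p_1(A), …, p_i(A) with leading term (t^{i−1}/(t)_i) p_i(A). -/
open PowerSeries Finset

/-- Falling factorial `(t)_k = t (t-1) ⋯ (t-k+1)`. -/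
noncomputable def ffall (t : ℝ) (k : ℕ) : ℝ := ∏ i ∈ Finset.range k, (t - i)

/-- The `t`-deformed convolution of formal power series. -/
noncomputable def tconv (t : ℝ) (A B : PowerSeries ℝ) : PowerSeries ℝ :=
  PowerSeries.mk fun k => ∑ p ∈ Finset.HasAntidiagonal.antidiagonal k,
    ffall t k / (ffall t p.1 * ffall t p.2)
      * (PowerSeries.coeff p.1 A) * (PowerSeries.coeff p.2 B)

/-- Formal logarithm of a power series (with constant term 1):
`log A = - Σ_{k ≥ 1} (1 - A)^k / k`. -/
noncomputable def flog (A : PowerSeries ℝ) : PowerSeries ℝ :=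
  PowerSeries.mk fun n =>
    -∑ k ∈ Finset.range (n + 1), (PowerSeries.coeff (R := ℝ) n ((1 - A) ^ k)) / k

/-- Power sums of `A ∈ 1 + zℝ⟦z⟧`, defined by `Σ p_k(A) z^k = -z (d/dz) log A(z)`. -/
noncomputable def powSum (A : PowerSeries ℝ) (k : ℕ) : ℝ :=
  -(k : ℝ) * PowerSeries.coeff k (flog A)

/-- `E^t[A](z) = Σ_k (t^k/(t)_k) a_k z^k`. -/
noncomputable def Et (t : ℝ) (A : PowerSeries ℝ) : PowerSeries ℝ :=
  PowerSeries.mk fun k => t ^ k / ffall t k * PowerSeries.coeff k A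

/-- The `t`-deformed cumulant transform `C^t[A](z) = -(z/t)(d/dz) log(E^t[A](z))`. -/
noncomputable def Ct (t : ℝ) (A : PowerSeries ℝ) : PowerSeries ℝ :=
  PowerSeries.mk fun n => -(1 / t) * ((n : ℝ) * PowerSeries.coeff n (flog (Et t A)))

/-- The `i`-th `t`-deformed cumulant of `A`. -/
noncomputable def kappa (t : ℝ) (A : PowerSeries ℝ) (i : ℕ) : ℝ :=
  PowerSeries.coeff i (Ct t A)

lemma coeff_pow_zero {u : PowerSeries ℝ} (hu : PowerSeries.constantCoeff u = 0)
    {n k : ℕ} (h : n < k) : PowerSeries.coeff n (u ^ k) = 0 := by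
  have : (PowerSeries.X : PowerSeries ℝ) ^ k ∣ u ^ k :=
    pow_dvd_pow_of_dvd (PowerSeries.X_dvd_iff.mpr hu) k
  exact (PowerSeries.X_pow_dvd_iff.mp this) n h

lemma coeff_flog_trunc (A : PowerSeries ℝ) (hA : PowerSeries.constantCoeff A = 1)
    (n N : ℕ) (h : n ≤ N) :
    PowerSeries.coeff n (flog A) =
      PowerSeries.coeff n (∑ k ∈ Finset.range (N + 1), (-(1:ℝ)/k) • (1 - A) ^ k) := by
  have hu : PowerSeries.constantCoeff (1 - A) = 0 := by simp [hA]
  rw [flog, PowerSeries.coeff_mk, map_sum]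
  have hterm : ∀ k : ℕ, PowerSeries.coeff (R := ℝ) n ((-(1:ℝ)/k) • (1 - A) ^ k)
      = -(PowerSeries.coeff (R := ℝ) n ((1 - A) ^ k) / k) := by
    intro k; rw [PowerSeries.coeff_smul, smul_eq_mul]; ring
  simp_rw [hterm]
  rw [← Finset.sum_neg_distrib]
  apply Finset.sum_subset (Finset.range_subset_range.mpr (show n+1 ≤ N+1 by omega))
  intro k _ hk
  rw [coeff_pow_zero hu (by simp at hk; omega), zero_div, neg_zero]

lemma newton (A : PowerSeries ℝ) (hA : PowerSeries.constantCoeff A = 1) (n : ℕ)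
    (hn : 1 ≤ n) :
    (n : ℝ) * PowerSeries.coeff n A =
      -∑ j ∈ Finset.range n, PowerSeries.coeff j A * powSum A (n - j) := by
  set u : PowerSeries ℝ := 1 - A with hu_def
  have hu : PowerSeries.constantCoeff u = 0 := by simp [hu_def, hA]
  set L : PowerSeries ℝ := ∑ k ∈ Finset.range (n + 1), (-(1:ℝ)/k) • u ^ k with hL_def
  have hDu : (d⁄dX ℝ) u = -((d⁄dX ℝ) A) := by
    rw [hu_def, map_sub, Derivation.map_one_eq_zero, zero_sub]
  have hDL : (d⁄dX ℝ) L = -((∑ j ∈ Finset.range n, u ^ j) * (d⁄dX ℝ) u) := by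
    rw [hL_def, map_sum, Finset.sum_range_succ']
    have h0 : (d⁄dX ℝ) ((-(1:ℝ)/((0:ℕ):ℝ)) • u ^ 0) = 0 := by
      simp
    rw [h0, add_zero]
    have hterm : ∀ k : ℕ, (d⁄dX ℝ) ((-(1:ℝ)/((k+1:ℕ):ℝ)) • u ^ (k+1)) =
        -(u ^ k * (d⁄dX ℝ) u) := by
      intro k
      rw [Derivation.map_smul, Derivation.leibniz_pow]
      rw [← Nat.cast_smul_eq_nsmul ℝ (k+1), smul_smul]
      have : -(1:ℝ)/((k+1:ℕ):ℝ) * ((k+1:ℕ):ℝ) = -1 := by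
        have : ((k+1:ℕ):ℝ) ≠ 0 := by positivity
        field_simp
      rw [this]
      simp [smul_eq_mul]
    simp_rw [hterm]
    rw [Finset.sum_neg_distrib, ← Finset.sum_mul]
  have hLcoeff : ∀ q, q ≤ n → PowerSeries.coeff q (flog A) = PowerSeries.coeff q L := by
    intro q hq
    rw [hL_def, hu_def]
    exact coeff_flog_trunc A hA q n hq
  have hAu : A = 1 - u := by rw [hu_def]; ring
  clear_value u L
  have key : A * (d⁄dX ℝ) L = (1 - u ^ n) * (d⁄dX ℝ) A := by
    have hgeom := geom_sum_mul u n
    rw [hDL, hDu]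
    linear_combination ((∑ j ∈ Finset.range n, u ^ j) * (d⁄dX ℝ) A) * hAu - ((d⁄dX ℝ) A) * hgeom
  -- coefficient m = n - 1
  obtain ⟨m, rfl⟩ : ∃ m, n = m + 1 := ⟨n - 1, by omega⟩
  have hcm : PowerSeries.coeff m (A * (d⁄dX ℝ) (flog A)) =
      PowerSeries.coeff m (A * (d⁄dX ℝ) L) := by
    rw [PowerSeries.coeff_mul, PowerSeries.coeff_mul]
    apply Finset.sum_congr rfl
    intro p hp
    have hp2 : p.2 ≤ m := (by have := Finset.HasAntidiagonal.mem_antidiagonal.mp hp; omega)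
    rw [PowerSeries.coeff_derivative, PowerSeries.coeff_derivative,
      hLcoeff (p.2+1) (by omega)]
  have hzero : PowerSeries.coeff m (u ^ (m+1) * (d⁄dX ℝ) A) = 0 := by
    rw [PowerSeries.coeff_mul]
    apply Finset.sum_eq_zero
    intro p hp
    have hp1 : p.1 ≤ m := (by have := Finset.HasAntidiagonal.mem_antidiagonal.mp hp; omega)
    rw [coeff_pow_zero hu (by omega), zero_mul]
  have hrhs : PowerSeries.coeff m (A * (d⁄dX ℝ) L) =
      ((m:ℝ)+1) * PowerSeries.coeff (m+1) A := by
    rw [key, sub_mul, one_mul, map_sub, hzero, sub_zero,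
      PowerSeries.coeff_derivative]
    ring
  rw [PowerSeries.coeff_mul] at hcm
  have hterm2 : ∀ p : ℕ × ℕ, p ∈ Finset.HasAntidiagonal.antidiagonal m →
      PowerSeries.coeff p.1 A * PowerSeries.coeff p.2 ((d⁄dX ℝ) (flog A)) =
      -(PowerSeries.coeff p.1 A * powSum A (m + 1 - p.1)) := by
    intro p hp
    have : p.1 ≤ m := (by have := Finset.HasAntidiagonal.mem_antidiagonal.mp hp; omega)
    have hp12 : p.2 = m - p.1 := by
      have := (Finset.HasAntidiagonal.mem_antidiagonal.mp hp); omega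
    rw [PowerSeries.coeff_derivative, powSum, hp12]
    have h12 : m - p.1 + 1 = m + 1 - p.1 := by omega
    rw [h12]
    push_cast [Nat.cast_sub (show p.1 ≤ m by omega), Nat.cast_sub (show p.1 ≤ m + 1 by omega)]
    ring
  rw [Finset.sum_congr rfl hterm2, Finset.sum_neg_distrib] at hcm
  rw [Finset.Nat.sum_antidiagonal_eq_sum_range_succ_mk] at hcm
  rw [hrhs] at hcm
  push_cast
  simpa using hcm.symm

/-- `f A` is a polynomial in `p_1(A), …, p_n(A)` for `A ∈ U`. -/
def PolyIn (n : ℕ) (f : PowerSeries ℝ → ℝ) : Prop :=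
  ∃ F : MvPolynomial (Fin n) ℝ, ∀ A : PowerSeries ℝ, PowerSeries.constantCoeff A = 1 →
    f A = MvPolynomial.eval (fun j : Fin n => powSum A (j.val + 1)) F

namespace PolyIn

lemma const (n : ℕ) (c : ℝ) : PolyIn n (fun _ => c) :=
  ⟨MvPolynomial.C c, fun A _ => by simp⟩

lemma congr {n : ℕ} {f g : PowerSeries ℝ → ℝ}
    (h : ∀ A, PowerSeries.constantCoeff A = 1 → f A = g A) (hg : PolyIn n g) :
    PolyIn n f := by
  obtain ⟨F, hF⟩ := hg
  exact ⟨F, fun A hA => (h A hA).trans (hF A hA)⟩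

lemma add {n : ℕ} {f g : PowerSeries ℝ → ℝ} (hf : PolyIn n f) (hg : PolyIn n g) :
    PolyIn n (fun A => f A + g A) := by
  obtain ⟨F, hF⟩ := hf; obtain ⟨G, hG⟩ := hg
  exact ⟨F + G, fun A hA => by simp [hF A hA, hG A hA]⟩

lemma mul {n : ℕ} {f g : PowerSeries ℝ → ℝ} (hf : PolyIn n f) (hg : PolyIn n g) :
    PolyIn n (fun A => f A * g A) := by
  obtain ⟨F, hF⟩ := hf; obtain ⟨G, hG⟩ := hg
  exact ⟨F * G, fun A hA => by simp [hF A hA, hG A hA]⟩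

lemma smul {n : ℕ} (c : ℝ) {f : PowerSeries ℝ → ℝ} (hf : PolyIn n f) :
    PolyIn n (fun A => c * f A) := (const n c).mul hf

lemma sum {n : ℕ} {ι : Type*} (s : Finset ι) (f : ι → PowerSeries ℝ → ℝ)
    (hf : ∀ i ∈ s, PolyIn n (f i)) : PolyIn n (fun A => ∑ i ∈ s, f i A) := by
  classical
  induction s using Finset.induction with
  | empty => exact congr (fun A _ => by simp) (const n 0)
  | insert a s hx ih =>
    refine congr (fun A _ => Finset.sum_insert hx) ?_
    exact (hf a (Finset.mem_insert_self a s)).add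
      (ih fun i hi => hf i (Finset.mem_insert_of_mem hi))

lemma powSum_mem {n k : ℕ} (hk1 : 1 ≤ k) (hkn : k ≤ n) :
    PolyIn n (fun A => powSum A k) := by
  refine ⟨MvPolynomial.X ⟨k - 1, by omega⟩, fun A hA => ?_⟩
  rw [MvPolynomial.eval_X]
  simp only [Nat.sub_add_cancel hk1]

lemma mono {m n : ℕ} (h : m ≤ n) {f : PowerSeries ℝ → ℝ} (hf : PolyIn m f) :
    PolyIn n f := by
  obtain ⟨F, hF⟩ := hf
  refine ⟨MvPolynomial.rename (Fin.castLE h) F, fun A hA => ?_⟩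
  rw [MvPolynomial.eval_rename]
  exact hF A hA

end PolyIn


lemma coeff_zero_one {A : PowerSeries ℝ} (hA : PowerSeries.constantCoeff A = 1) :
    PowerSeries.coeff 0 A = 1 := by
  rw [PowerSeries.coeff_zero_eq_constantCoeff]; exact hA

/-- Recursive splitting: `a_n + (1/n) p_n` is a polynomial in `p_1,…,p_{n-1}`. -/
lemma coeff_split : ∀ n : ℕ, 1 ≤ n →
    PolyIn (n - 1) (fun A => PowerSeries.coeff n A + (1 / (n : ℝ)) * powSum A n) := by
  intro n
  induction n using Nat.strong_induction_on with
  | _ n ih =>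
    intro hn
    obtain ⟨m, rfl⟩ : ∃ m, n = m + 1 := ⟨n - 1, by omega⟩
    have hcoeff : ∀ k : ℕ, 1 ≤ k → k ≤ m → PolyIn m (fun A => PowerSeries.coeff k A) := by
      intro k hk1 hkm
      have h1 := ih k (by omega) hk1
      have h2 : PolyIn k (fun A => PowerSeries.coeff k A) := by
        refine PolyIn.congr (fun A hA => ?_)
          ((PolyIn.mono (by omega) h1).add (PolyIn.smul (-(1/(k:ℝ))) (PolyIn.powSum_mem hk1 le_rfl)))
        ring
      exact h2.mono hkm
    have hpt : ∀ A : PowerSeries ℝ, PowerSeries.constantCoeff A = 1 →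
        PowerSeries.coeff (m+1) A + (1 / ((m+1 : ℕ) : ℝ)) * powSum A (m+1) =
        ∑ i ∈ Finset.range m,
          (-(1 / ((m+1 : ℕ) : ℝ))) * (PowerSeries.coeff (i+1) A * powSum A (m+1-(i+1))) := by
      intro A hA
      have hN := newton A hA (m+1) (by omega)
      rw [Finset.sum_range_succ', coeff_zero_one hA, one_mul] at hN
      rw [← Finset.mul_sum]
      have hne : (((m+1:ℕ)) : ℝ) ≠ 0 := by positivity
      push_cast at hN ⊢
      field_simp
      linarith [hN]
    simp only [Nat.add_sub_cancel]
    refine PolyIn.congr hpt (PolyIn.sum _ _ ?_)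
    intro i hi
    rw [Finset.mem_range] at hi
    exact PolyIn.smul _ ((hcoeff (i+1) (by omega) (by omega)).mul
      (PolyIn.powSum_mem (by omega) (by omega)))

lemma coeff_polyIn {n : ℕ} (hn : 1 ≤ n) : PolyIn n (fun A => PowerSeries.coeff n A) := by
  have h1 := coeff_split n hn
  refine PolyIn.congr (fun A hA => ?_)
    ((PolyIn.mono (by omega) h1).add (PolyIn.smul (-(1/(n:ℝ))) (PolyIn.powSum_mem hn le_rfl)))
  ring

lemma ffall_zero (t : ℝ) : ffall t 0 = 1 := by simp [ffall]

lemma coeff_Et (t : ℝ) (A : PowerSeries ℝ) (k : ℕ) :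
    PowerSeries.coeff k (Et t A) = t ^ k / ffall t k * PowerSeries.coeff k A := by
  rw [Et, PowerSeries.coeff_mk]

lemma constantCoeff_Et (t : ℝ) {A : PowerSeries ℝ}
    (hA : PowerSeries.constantCoeff A = 1) :
    PowerSeries.constantCoeff (Et t A) = 1 := by
  rw [← PowerSeries.coeff_zero_eq_constantCoeff_apply, coeff_Et, ffall_zero,
    coeff_zero_one hA]
  simp

/-- Key induction: `p_n(E^t[A]) - (t^n/(t)_n) p_n(A)` is a polynomial in `p_1,…,p_{n-1}`. -/
lemma ptilde_split (t : ℝ) : ∀ n : ℕ, 1 ≤ n →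
    PolyIn (n - 1) (fun A => powSum (Et t A) n - (t ^ n / ffall t n) * powSum A n) := by
  intro n
  induction n using Nat.strong_induction_on with
  | _ n ih =>
    intro hn
    obtain ⟨m, rfl⟩ : ∃ m, n = m + 1 := ⟨n - 1, by omega⟩
    have hptilde : ∀ k : ℕ, 1 ≤ k → k ≤ m → PolyIn m (fun A => powSum (Et t A) k) := by
      intro k hk1 hkm
      have h1 := ih k (by omega) hk1
      have h2 : PolyIn k (fun A => powSum (Et t A) k) := by
        refine PolyIn.congr (fun A hA => ?_)
          ((PolyIn.mono (by omega) h1).add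
            (PolyIn.smul (t ^ k / ffall t k) (PolyIn.powSum_mem hk1 le_rfl)))
        ring
      exact h2.mono hkm
    have hpt : ∀ A : PowerSeries ℝ, PowerSeries.constantCoeff A = 1 →
        powSum (Et t A) (m+1) - (t ^ (m+1) / ffall t (m+1)) * powSum A (m+1) =
        (-(t ^ (m+1) / ffall t (m+1))) *
            (((m+1:ℕ):ℝ) * (PowerSeries.coeff (m+1) A +
              (1 / ((m+1:ℕ):ℝ)) * powSum A (m+1))) +
          ∑ i ∈ Finset.range m,
            (-(t ^ (i+1) / ffall t (i+1))) *
              (PowerSeries.coeff (i+1) A * powSum (Et t A) (m+1-(i+1))) := by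
      intro A hA
      have hB : PowerSeries.constantCoeff (Et t A) = 1 := constantCoeff_Et t hA
      have hN := newton (Et t A) hB (m+1) (by omega)
      rw [Finset.sum_range_succ', coeff_zero_one hB, one_mul] at hN
      simp only [coeff_Et] at hN
      have hne : (((m+1:ℕ)) : ℝ) ≠ 0 := by positivity
      have hsplit : ((m+1:ℕ):ℝ) * (PowerSeries.coeff (m+1) A +
          (1 / ((m+1:ℕ):ℝ)) * powSum A (m+1)) =
          ((m+1:ℕ):ℝ) * PowerSeries.coeff (m+1) A + powSum A (m+1) := by
        field_simp
      rw [hsplit]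
      have hidx : ∀ i : ℕ, m + 1 - (i+1) = m - i := fun i => by omega
      simp only [hidx, Nat.sub_zero] at hN ⊢
      have hSeq : ∑ i ∈ Finset.range m, (-(t ^ (i+1) / ffall t (i+1))) *
          (PowerSeries.coeff (i+1) A * powSum (Et t A) (m-i)) =
          -∑ i ∈ Finset.range m, t ^ (i+1) / ffall t (i+1) *
            PowerSeries.coeff (i+1) A * powSum (Et t A) (m-i) := by
        rw [← Finset.sum_neg_distrib]
        exact Finset.sum_congr rfl fun i _ => by ring
      rw [hSeq]
      linear_combination hN
    simp only [Nat.add_sub_cancel]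
    refine PolyIn.congr hpt (PolyIn.add (PolyIn.smul _ (PolyIn.smul _ ?_)) (PolyIn.sum _ _ ?_))
    · exact coeff_split (m+1) (by omega)
    · intro i hi
      rw [Finset.mem_range] at hi
      refine PolyIn.smul _ (PolyIn.mul ?_ ?_)
      · exact (coeff_polyIn (n := i+1) (by omega)).mono (by omega)
      · exact hptilde (m+1-(i+1)) (by omega) (by omega)

/-- For `t ∈ ℝ \ ℤ_{≥0}` and `i ≥ 1`, there is a polynomial `F_i` in `i-1` variables
such that for every `A ∈ U`,
`κ_i^t(A) = (t^{i-1}/(t)_i) p_i(A) + F_i(p_1(A), …, p_{i-1}(A))`. -/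
theorem kappa_polynomial_in_powSums (t : ℝ) (ht : ∀ n : ℕ, t ≠ (n : ℝ))
    (i : ℕ) (hi : 1 ≤ i) :
    ∃ F : MvPolynomial (Fin (i - 1)) ℝ,
      ∀ A : PowerSeries ℝ, PowerSeries.constantCoeff A = 1 →
        kappa t A i =
          t ^ (i - 1) / ffall t i * powSum A i +
            MvPolynomial.eval (fun j : Fin (i - 1) => powSum A (j.val + 1)) F := by
  have ht0 : t ≠ 0 := by simpa using ht 0
  have hk : ∀ A : PowerSeries ℝ, kappa t A i = (1 / t) * powSum (Et t A) i := by
    intro A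
    rw [kappa, Ct, PowerSeries.coeff_mk, powSum]
    ring
  have hc : (1 / t) * (t ^ i / ffall t i) = t ^ (i - 1) / ffall t i := by
    obtain ⟨j, rfl⟩ : ∃ j, i = j + 1 := ⟨i - 1, by omega⟩
    rw [pow_succ']
    field_simp
    simp
  have hP : PolyIn (i - 1)
      (fun A => kappa t A i - t ^ (i - 1) / ffall t i * powSum A i) := by
    refine PolyIn.congr (fun A hA => ?_) (PolyIn.smul (1/t) (ptilde_split t i hi))
    rw [hk A]
    linear_combination (powSum A i) * hc
  obtain ⟨F, hF⟩ := hP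
  refine ⟨F, fun A hA => ?_⟩
  have := hF A hA
  linarith [hF A hA]
end

section
/- For t ∈ ℝ \ ℤ_{≥0} and λ ∈ ℝ, the t-deformed cumulant transform of the t-deformed binomial series B_λ^{(t)}(z) := (1−λz)^t = 1 + Σ_{k≥1} (−1)^k ((t)_k/k!) λ^k z^k satisfies C^t[B_λ^{(t)}](z) = λz; equivalently, κ_1^t(B_λ^{(t)}) = λ and κ_n^t(B_λ^{(t)}) = 0 for all n ≥ 2. -/
open PowerSeries Finset

/-- The `t`-deformed binomial series `B_λ^{(t)}(z) = (1-λz)^t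
= 1 + Σ_{k≥1} (-1)^k ((t)_k/k!) λ^k z^k`. -/
noncomputable def Bt (t lam : ℝ) : PowerSeries ℝ :=
  PowerSeries.mk fun k => (-1) ^ k * ffall t k / (k.factorial : ℝ) * lam ^ k

/-- The exponential series `exp(cz)`. -/
noncomputable def expc (c : ℝ) : PowerSeries ℝ :=
  PowerSeries.mk fun k => c ^ k / (k.factorial : ℝ)

lemma ffall_ne_zero (t : ℝ) (ht : ∀ n : ℕ, t ≠ (n : ℝ)) (k : ℕ) : ffall t k ≠ 0 :=
  Finset.prod_ne_zero_iff.2 fun i _ => sub_ne_zero.2 (ht i)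

lemma Et_Bt (t : ℝ) (ht : ∀ n : ℕ, t ≠ (n : ℝ)) (lam : ℝ) :
    Et t (Bt t lam) = expc (-(t * lam)) := by
  ext k
  simp only [Et, Bt, expc, coeff_mk]
  have hF : ffall t k ≠ 0 := ffall_ne_zero t ht k
  have hf : (k.factorial : ℝ) ≠ 0 := Nat.cast_ne_zero.2 k.factorial_ne_zero
  rw [show (-(t * lam)) ^ k = (-1) ^ k * (t ^ k * lam ^ k) by rw [neg_pow, mul_pow]]
  field_simp

lemma deriv_expc (c : ℝ) : d⁄dX ℝ (expc c) = C c * expc c := by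
  ext n
  rw [coeff_derivative]
  simp only [expc, coeff_mk, coeff_C_mul]
  have hf : ((n.factorial : ℝ)) ≠ 0 := Nat.cast_ne_zero.2 n.factorial_ne_zero
  have hn1 : ((n : ℝ) + 1) ≠ 0 := by positivity
  rw [Nat.factorial_succ, pow_succ]
  push_cast
  field_simp

lemma key (c : ℝ) (n : ℕ) (hn : 1 ≤ n) :
    (n : ℝ) * PowerSeries.coeff n (flog (expc c)) = if n = 1 then c else 0 := by
  set E := expc c with hE
  set u : PowerSeries ℝ := 1 - E with hu
  have hu0 : constantCoeff u = 0 := by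
    simp [hu, hE, expc, ← coeff_zero_eq_constantCoeff]
  have hdu : d⁄dX ℝ u = -(C c * E) := by
    rw [hu, map_sub, deriv_expc]
    simp [hE]
  -- the per-term identity
  have hterm : ∀ k : ℕ,
      (n : ℝ) * ((PowerSeries.coeff n (u ^ k)) / (k : ℝ)) =
      if k = 0 then 0 else
        -c * (PowerSeries.coeff (n - 1) (u ^ (k - 1)) -
              PowerSeries.coeff (n - 1) (u ^ k)) := by
    intro k
    rcases k with _ | j
    · simp
    · rw [if_neg (Nat.succ_ne_zero j)]
      have h1 : n - 1 + 1 = n := by omega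
      have hD : PowerSeries.coeff (n - 1) (d⁄dX ℝ (u ^ (j + 1))) =
          PowerSeries.coeff n (u ^ (j + 1)) * n := by
        rw [coeff_derivative, h1, Nat.cast_sub hn]
        push_cast
        ring
      have hUE : u ^ j * E = u ^ j - u ^ (j + 1) := by
        have hEu : E = 1 - u := by rw [hu]; ring
        rw [hEu]; ring
      have hL : d⁄dX ℝ (u ^ (j + 1)) =
          C (-(c * ((j : ℝ) + 1))) * (u ^ j * E) := by
        rw [Derivation.leibniz_pow, hdu, Nat.succ_sub_one, smul_eq_mul, nsmul_eq_mul]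
        have hC : C (-(c * ((j : ℝ) + 1))) = -(C c * ((j : ℝ⟦X⟧) + 1)) := by
          rw [map_neg, map_mul]
          congr 1
          congr 1
          rw [map_add, map_one, map_natCast]
        rw [hC]
        push_cast
        ring
      have h2 : PowerSeries.coeff n (u ^ (j + 1)) * n =
          ((j : ℝ) + 1) * (-c * (PowerSeries.coeff (n - 1) (u ^ j) -
            PowerSeries.coeff (n - 1) (u ^ (j + 1)))) := by
        rw [← hD, hL, hUE, coeff_C_mul, map_sub]
        ring
      have hj1 : ((j : ℝ) + 1) ≠ 0 := by positivity
      push_cast [Nat.succ_sub_one]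
      rw [mul_div_assoc', div_eq_iff hj1]
      linear_combination h2
  rw [flog, coeff_mk, mul_neg, Finset.mul_sum]
  rw [show (1 : ℝ⟦X⟧) - expc c = u from rfl]
  rw [Finset.sum_congr rfl (fun k _ => hterm k)]
  rw [Finset.sum_range_succ', if_pos rfl, add_zero]
  simp only [Nat.succ_ne_zero, if_neg, Nat.add_sub_cancel, if_false]
  rw [← Finset.mul_sum, Finset.sum_range_sub']
  have hun : PowerSeries.coeff (n - 1) (u ^ n) = 0 := by
    obtain ⟨v, hv⟩ := PowerSeries.X_dvd_iff.2 hu0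
    rw [hv, mul_pow, coeff_X_pow_mul', if_neg (by omega)]
  rw [pow_zero, hun, sub_zero, coeff_one]
  rcases eq_or_ne n 1 with h1 | h1
  · subst h1; norm_num
  · rw [if_neg (by omega), if_neg h1]
    ring

/-- `C^t[B_λ^{(t)}](z) = λz`; equivalently `κ_1^t(B_λ^{(t)}) = λ` and
`κ_n^t(B_λ^{(t)}) = 0` for all `n ≥ 2`. -/
theorem Ct_Bt (t : ℝ) (ht : ∀ n : ℕ, t ≠ (n : ℝ)) (lam : ℝ) :
    Ct t (Bt t lam) = PowerSeries.C lam * PowerSeries.X ∧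
    kappa t (Bt t lam) 1 = lam ∧
    ∀ n : ℕ, 2 ≤ n → kappa t (Bt t lam) n = 0 := by
  have ht0 : t ≠ 0 := by simpa using ht 0
  have hmain : Ct t (Bt t lam) = PowerSeries.C lam * PowerSeries.X := by
    ext n
    rw [Ct, coeff_mk, Et_Bt t ht lam, coeff_C_mul, coeff_X]
    rcases Nat.eq_zero_or_pos n with h0 | hpos
    · subst h0; simp
    · rw [key _ n hpos]
      rcases eq_or_ne n 1 with h1 | h1
      · subst h1
        rw [if_pos rfl, if_pos rfl]
        field_simp
      · rw [if_neg h1, if_neg h1, mul_zero, mul_zero]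
  refine ⟨hmain, ?_, ?_⟩
  · rw [kappa, hmain, coeff_C_mul, coeff_X, if_pos rfl, mul_one]
  · intro n hn
    rw [kappa, hmain, coeff_C_mul, coeff_X, if_neg (by omega), mul_zero]
end
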